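/- If the Lagrangian L is invariant under translations in the direction e ∈ ℝ^n (i.e., L(q + λe, v) = L(q, v) for all λ ∈ ℝ) and there are no forces, then the discrete momentum Σ_{ν=0}^s D_{ν+1}L_d(q⁰,…,q^s) · e = 0 for any multipoint discrete Lagrangian L_d(q⁰,…,q^s) = h Σ_i b_i L(q^d(c_i h), q̇^d(c_i h)); consequently, along solutions of the discrete Euler-Lagrange equations, the quantity D_{s+1}L_d(q_k⁰,…,q_k^s)·e is conserved from step to step (discrete Noether theorem). -/

import Mathlib

open Finset

/-- The Lagrange basis polynomial `P_ν(t) = ∏_{μ ≠ ν} (t - d_μ)/(d_ν - d_μ)`. -/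
noncomputable def lagrangeBasis {s : ℕ} (d : Fin (s+1) → ℝ) (ν : Fin (s+1)) (t : ℝ) : ℝ :=
  ∏ μ ∈ Finset.univ.erase ν, (t - d μ) / (d ν - d μ)

/-- The multipoint discrete Lagrangian
`L_d(q⁰,…,q^s) = h ∑_i b_i L(q^d(c_i h), q̇^d(c_i h))`. -/
noncomputable def multipointLd {n s r : ℕ} (h : ℝ) (d : Fin (s+1) → ℝ)
    (c b : Fin r → ℝ)
    (L : (Fin n → ℝ) → (Fin n → ℝ) → ℝ)
    (qs : Fin (s+1) → (Fin n → ℝ)) : ℝ :=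
  h * ∑ i, b i * L (∑ ν, lagrangeBasis d ν (c i) • qs ν)
    ((1/h) • ∑ ν, deriv (lagrangeBasis d ν) (c i) • qs ν)

lemma lagrangeBasis_eq_eval {s : ℕ} (d : Fin (s+1) → ℝ) (ν : Fin (s+1)) :
    lagrangeBasis d ν = fun t => (Lagrange.basis Finset.univ d ν).eval t := by
  funext t
  simp only [lagrangeBasis, Lagrange.basis, Polynomial.eval_prod, Lagrange.basisDivisor,
    Polynomial.eval_mul, Polynomial.eval_C, Polynomial.eval_sub, Polynomial.eval_X]
  exact Finset.prod_congr rfl fun μ _ => by rw [div_eq_mul_inv, mul_comm]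

lemma sum_lagrangeBasis {s : ℕ} {d : Fin (s+1) → ℝ} (hd : Function.Injective d) (t : ℝ) :
    ∑ ν, lagrangeBasis d ν t = 1 := by
  have h1 : ∑ ν, Lagrange.basis Finset.univ d ν = 1 :=
    Lagrange.sum_basis (hd.injOn) Finset.univ_nonempty
  have := congrArg (Polynomial.eval t) h1
  simp only [Polynomial.eval_finset_sum, Polynomial.eval_one] at this
  simpa only [lagrangeBasis_eq_eval] using this

lemma sum_deriv_lagrangeBasis {s : ℕ} {d : Fin (s+1) → ℝ} (hd : Function.Injective d) (t : ℝ) :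
    ∑ ν, deriv (lagrangeBasis d ν) t = 0 := by
  have h1 : ∑ ν, Lagrange.basis Finset.univ d ν = 1 :=
    Lagrange.sum_basis (hd.injOn) Finset.univ_nonempty
  have h2 : ∑ ν, Polynomial.derivative (Lagrange.basis Finset.univ d ν) = 0 := by
    rw [← map_sum, h1]; simp
  have := congrArg (Polynomial.eval t) h2
  simp only [Polynomial.eval_finset_sum, Polynomial.eval_zero] at this
  calc ∑ ν, deriv (lagrangeBasis d ν) t
      = ∑ ν, Polynomial.eval t (Polynomial.derivative (Lagrange.basis Finset.univ d ν)) := by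
        refine Finset.sum_congr rfl fun ν _ => ?_
        rw [lagrangeBasis_eq_eval]; exact Polynomial.deriv _
    _ = 0 := this

lemma multipointLd_invariant {n s r : ℕ} (h : ℝ) {d : Fin (s+1) → ℝ}
    (hd : Function.Injective d) (c b : Fin r → ℝ)
    (L : (Fin n → ℝ) → (Fin n → ℝ) → ℝ) (e : Fin n → ℝ)
    (hinv : ∀ (x v : Fin n → ℝ) (lam : ℝ), L (x + lam • e) v = L x v)
    (qs : Fin (s+1) → (Fin n → ℝ)) (lam : ℝ) :
    multipointLd h d c b L (fun ν => qs ν + lam • e) = multipointLd h d c b L qs := by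
  unfold multipointLd
  congr 1
  refine Finset.sum_congr rfl fun i _ => ?_
  have hp : (∑ ν, lagrangeBasis d ν (c i) • (qs ν + lam • e))
      = (∑ ν, lagrangeBasis d ν (c i) • qs ν) + lam • e := by
    simp only [smul_add, Finset.sum_add_distrib]
    congr 1
    rw [← Finset.sum_smul, sum_lagrangeBasis hd, one_smul]
  have hv : (∑ ν, deriv (lagrangeBasis d ν) (c i) • (qs ν + lam • e))
      = ∑ ν, deriv (lagrangeBasis d ν) (c i) • qs ν := by
    simp only [smul_add, Finset.sum_add_distrib]
    rw [← Finset.sum_smul, sum_deriv_lagrangeBasis hd, zero_smul, add_zero]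
  rw [hp, hv, hinv]

lemma multipointLd_differentiable {n s r : ℕ} (h : ℝ) (d : Fin (s+1) → ℝ)
    (c b : Fin r → ℝ) (L : (Fin n → ℝ) → (Fin n → ℝ) → ℝ)
    (hL : ContDiff ℝ 1 (fun p : (Fin n → ℝ) × (Fin n → ℝ) => L p.1 p.2)) :
    Differentiable ℝ (multipointLd h d c b L) := by
  have hlin : ∀ (coef : Fin (s+1) → ℝ),
      Differentiable ℝ (fun qs : Fin (s+1) → (Fin n → ℝ) => ∑ ν, coef ν • qs ν) := by
    intro coef
    apply Differentiable.fun_sum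
    intro ν _
    exact ((ContinuousLinearMap.proj ν :
      (Fin (s+1) → (Fin n → ℝ)) →L[ℝ] (Fin n → ℝ)).differentiable).const_smul (coef ν)
  unfold multipointLd
  apply Differentiable.const_mul
  apply Differentiable.fun_sum
  intro i _
  apply Differentiable.const_mul
  exact (hL.differentiable one_ne_zero).comp
    ((hlin _).prodMk (((hlin _)).const_smul (1/h)))

/-- Discrete Noether theorem for translation symmetry: if `L` is invariant
under translations in the direction `e` and there are no forces, then
`∑_ν D_{ν+1}L_d · e = 0`, and along solutions of the discrete Euler–Lagrange
equations the discrete momentum `D_{s+1}L_d(q_k⁰,…,q_k^s)·e` is conserved. -/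
theorem discrete_noether_translation {n s r N : ℕ} (hs : 1 ≤ s)
    (h : ℝ) (hh : 0 < h)
    (d : Fin (s+1) → ℝ) (hd : Function.Injective d)
    (hmem : ∀ ν, d ν ∈ Set.Icc (0:ℝ) 1)
    (c b : Fin r → ℝ) (hc : ∀ i, c i ∈ Set.Icc (0:ℝ) 1)
    (L : (Fin n → ℝ) → (Fin n → ℝ) → ℝ) (hL : ContDiff ℝ 1 (fun p : (Fin n → ℝ) × (Fin n → ℝ) => L p.1 p.2))
    (e : Fin n → ℝ)
    (hinv : ∀ (x v : Fin n → ℝ) (lam : ℝ), L (x + lam • e) v = L x v) :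
    (∀ qs : Fin (s+1) → (Fin n → ℝ),
        ∑ ν, fderiv ℝ (multipointLd h d c b L) qs (Pi.single ν e) = 0) ∧
    (∀ q : ℕ → Fin (s+1) → (Fin n → ℝ),
      -- interior discrete Euler–Lagrange equations (no forces)
      (∀ k, k < N → ∀ ν : Fin (s+1), ν ≠ 0 → ν ≠ Fin.last s →
        ∀ w : Fin n → ℝ, fderiv ℝ (multipointLd h d c b L) (q k) (Pi.single ν w) = 0) →
      -- the coupled discrete Euler–Lagrange equation at the macro nodes
      (∀ k, k + 1 < N → ∀ w : Fin n → ℝ,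
        fderiv ℝ (multipointLd h d c b L) (q k) (Pi.single (Fin.last s) w)
          + fderiv ℝ (multipointLd h d c b L) (q (k+1)) (Pi.single 0 w) = 0) →
      ∀ k, k + 1 < N →
        fderiv ℝ (multipointLd h d c b L) (q (k+1)) (Pi.single (Fin.last s) e)
          = fderiv ℝ (multipointLd h d c b L) (q k) (Pi.single (Fin.last s) e)) := by
  have hdiff := multipointLd_differentiable h d c b L hL
  -- first claim
  have main : ∀ qs : Fin (s+1) → (Fin n → ℝ),
      ∑ ν, fderiv ℝ (multipointLd h d c b L) qs (Pi.single ν e) = 0 := by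
    intro qs
    set v : Fin (s+1) → (Fin n → ℝ) := fun _ => e with hv
    have hsum : ∑ ν, (Pi.single ν e : Fin (s+1) → (Fin n → ℝ)) = v := by
      funext μ
      simp [Finset.sum_apply, Pi.single_apply, hv]
    have hfd : fderiv ℝ (multipointLd h d c b L) qs v = 0 := by
      -- composition with the line λ ↦ qs + λ • v, which is constant
      have heq : ∀ lam : ℝ, (qs + lam • v) = fun ν => qs ν + lam • e := fun lam => rfl
      have hg : HasDerivAt (fun lam : ℝ => qs + lam • v) v 0 := by
        simpa using ((hasDerivAt_id (0:ℝ)).smul_const v).const_add qs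
      have hF : HasFDerivAt (multipointLd h d c b L)
          (fderiv ℝ (multipointLd h d c b L) qs) (qs + (0:ℝ) • v) := by
        simpa using (hdiff qs).hasFDerivAt
      have hcomp : HasDerivAt (fun lam : ℝ => multipointLd h d c b L (qs + lam • v))
          (fderiv ℝ (multipointLd h d c b L) qs v) 0 := hF.comp_hasDerivAt (f := fun lam : ℝ => qs + lam • v) 0 hg
      have hconst : (fun lam : ℝ => multipointLd h d c b L (qs + lam • v))
          = fun _ => multipointLd h d c b L qs := by
        funext lam
        rw [heq lam]
        exact multipointLd_invariant h hd c b L e hinv qs lam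
      rw [hconst] at hcomp
      have := (hasDerivAt_const (0:ℝ) (multipointLd h d c b L qs)).unique hcomp
      exact this.symm
    calc ∑ ν, fderiv ℝ (multipointLd h d c b L) qs (Pi.single ν e)
        = fderiv ℝ (multipointLd h d c b L) qs (∑ ν, Pi.single ν e) := by
          rw [map_sum]
      _ = 0 := by rw [hsum, hfd]
  refine ⟨main, ?_⟩
  intro q hDEL hcoupled k hk
  have hk1 : k + 1 < N := hk
  have h0last : (0 : Fin (s+1)) ≠ Fin.last s := by
    intro hcontra
    have := Fin.val_eq_of_eq hcontra
    simp [Fin.last] at this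
    omega
  -- split the sum at q (k+1)
  have hsplit := main (q (k+1))
  have hrest : ∀ ν ∈ (Finset.univ.erase (0 : Fin (s+1))).erase (Fin.last s),
      fderiv ℝ (multipointLd h d c b L) (q (k+1)) (Pi.single ν e) = 0 := by
    intro ν hν
    rw [Finset.mem_erase, Finset.mem_erase] at hν
    exact hDEL (k+1) hk1 ν hν.2.1 hν.1 e
  have hlast_mem : Fin.last s ∈ Finset.univ.erase (0 : Fin (s+1)) :=
    Finset.mem_erase.mpr ⟨Ne.symm h0last, Finset.mem_univ _⟩
  have hsum2 : ∑ ν, fderiv ℝ (multipointLd h d c b L) (q (k+1)) (Pi.single ν e)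
      = fderiv ℝ (multipointLd h d c b L) (q (k+1)) (Pi.single 0 e)
        + fderiv ℝ (multipointLd h d c b L) (q (k+1)) (Pi.single (Fin.last s) e) := by
    rw [← Finset.add_sum_erase _ _ (Finset.mem_univ (0 : Fin (s+1))),
      ← Finset.add_sum_erase _ _ hlast_mem,
      Finset.sum_eq_zero hrest]
    ring
  rw [hsum2] at hsplit
  have hcpl := hcoupled k hk e
  linarith
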